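/- Let P be a finite poset and A an antichain of P. Then e(P) ≥ ∑_{v ∈ A} e(P \ v), where P \ v is the induced poset on the ground set minus v. -/

import Mathlib

/-- The number of linear extensions of a partial order `P` on a finite type `V`. -/
noncomputable def eCount (V : Type*) [Fintype V] (P : PartialOrder V) : ℕ :=
  Nat.card {f : V ≃ Fin (Fintype.card V) // ∀ a b, P.lt a b → f a < f b}

/-- The induced partial order `P \ v` on the ground set with the element `v` removed. -/
def delOrder {V : Type*} (P : PartialOrder V) (v : V) : PartialOrder {x : V // x ≠ v} where
  le a b := P.le a b
  lt a b := P.lt a b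
  lt_iff_le_not_ge a b := P.lt_iff_le_not_ge _ _
  le_refl a := P.le_refl a
  le_trans a b c := P.le_trans a b c
  le_antisymm a b h1 h2 := Subtype.ext (P.le_antisymm a b h1 h2)


namespace SA

open Finset
open scoped Classical



section Generic

variable {W : Type*} [Fintype W] [PartialOrder W]

theorem exists_chain_top (C : Finset W) (hne : C.Nonempty)
    (hC : IsChain (· ≤ ·) (C : Set W)) : ∃ w ∈ C, ∀ u ∈ C, u ≤ w := by
  obtain ⟨w, hw, hmax⟩ := C.exists_maximal hne
  refine ⟨w, hw, fun u hu => ?_⟩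
  rcases eq_or_ne u w with rfl | hne'
  · exact le_rfl
  · rcases hC hu hw hne' with h | h
    · exact h
    · exact absurd (lt_of_le_of_ne h (Ne.symm hne')) (fun hlt => hlt.not_ge (hmax hu hlt.le))

/-- the set of elements strictly below `v`. -/
noncomputable def strictBelow (v : W) : Finset W := univ.filter (· < v)

theorem mem_strictBelow {u v : W} : u ∈ strictBelow v ↔ u < v := by
  simp [strictBelow]

/-- inverse transfer map -/
noncomputable def itr (h : W → ℕ) (v : W) : ℕ := h v - (strictBelow v).sup h

theorem supBelow_le {h : W → ℕ} (hs : StrictMono h) (v : W) :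
    (strictBelow v).sup h ≤ h v :=
  Finset.sup_le fun u hu => (hs (mem_strictBelow.1 hu)).le

theorem itr_add {h : W → ℕ} (hs : StrictMono h) (v : W) :
    itr h v + (strictBelow v).sup h = h v :=
  Nat.sub_add_cancel (supBelow_le hs v)

theorem itr_inj {h₁ h₂ : W → ℕ} (hs₁ : StrictMono h₁) (hs₂ : StrictMono h₂)
    (hitr : itr h₁ = itr h₂) : h₁ = h₂ := by
  have : ∀ v : W, h₁ v = h₂ v := by
    intro v
    induction v using WellFoundedLT.induction with
    | ind v ih =>
      rw [← itr_add hs₁ v, ← itr_add hs₂ v, hitr]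
      congr 1
      exact Finset.sup_congr rfl fun u hu => ih u (mem_strictBelow.1 hu)
  exact funext this

theorem sum_itr_le {h : W → ℕ} (hs : StrictMono h) (C : Finset W) :
    IsChain (· ≤ ·) (C : Set W) → ∀ w ∈ C, (∀ u ∈ C, u ≤ w) →
    ∑ u ∈ C, itr h u ≤ h w := by
  induction C using Finset.strongInduction with
  | _ C ih =>
    intro hC w hw hmax
    rw [← Finset.sum_erase_add C _ hw]
    rcases (C.erase w).eq_empty_or_nonempty with he | hne
    · rw [he, Finset.sum_empty, Nat.zero_add]
      exact Nat.sub_le _ _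
    · obtain ⟨w', hw', hmax'⟩ := exists_chain_top _ hne
        (hC.mono (by exact_mod_cast Finset.erase_subset _ _))
      have hlt : w' < w :=
        lt_of_le_of_ne (hmax _ (Finset.mem_of_mem_erase hw')) (Finset.ne_of_mem_erase hw')
      have h1 : ∑ u ∈ C.erase w, itr h u ≤ h w' :=
        ih _ (Finset.erase_ssubset hw) (hC.mono (by exact_mod_cast Finset.erase_subset _ _))
          w' hw' hmax'
      have h2 : h w' ≤ (strictBelow w).sup h := Finset.le_sup (mem_strictBelow.2 hlt)
      have h3 := supBelow_le hs w
      have h4 : itr h w = h w - (strictBelow w).sup h := rfl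
      omega

/-- all chains whose elements lie below `v` -/
noncomputable def chainsLe (v : W) : Finset (Finset W) :=
  (univ : Finset (Finset W)).filter (fun C => IsChain (· ≤ ·) (C : Set W) ∧ ∀ u ∈ C, u ≤ v)

theorem mem_chainsLe {v : W} {C : Finset W} :
    C ∈ chainsLe v ↔ IsChain (· ≤ ·) (C : Set W) ∧ ∀ u ∈ C, u ≤ v := by
  simp [chainsLe]

/-- maximal chain sum: the transfer map -/
noncomputable def mcs (f : W → ℕ) (v : W) : ℕ :=
  (chainsLe v).sup (fun C => ∑ u ∈ C, f u)

theorem mcs_mono (f : W → ℕ) : Monotone (mcs f) := by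
  intro v v' hvv'
  apply Finset.sup_mono
  intro C hC
  rw [mem_chainsLe] at hC ⊢
  exact ⟨hC.1, fun u hu => (hC.2 u hu).trans hvv'⟩

theorem mcs_le {f : W → ℕ} {m : ℕ}
    (hf : ∀ C : Finset W, IsChain (· ≤ ·) (C : Set W) → ∑ u ∈ C, f u ≤ m) (v : W) :
    mcs f v ≤ m :=
  Finset.sup_le fun C hC => hf C (mem_chainsLe.1 hC).1

theorem mcs_unfold (f : W → ℕ) (v : W) :
    mcs f v = f v + (strictBelow v).sup (mcs f) := by
  apply le_antisymm
  · apply Finset.sup_le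
    intro C hC
    rw [mem_chainsLe] at hC
    obtain ⟨hchain, hle⟩ := hC
    by_cases hvC : v ∈ C
    · rw [← Finset.sum_erase_add C _ hvC, Nat.add_comm]
      have hbd : ∑ u ∈ C.erase v, f u ≤ (strictBelow v).sup (mcs f) := by
        rcases (C.erase v).eq_empty_or_nonempty with he | hne
        · simp [he]
        · obtain ⟨w', hw', hmax'⟩ := exists_chain_top _ hne
            (hchain.mono (by exact_mod_cast Finset.erase_subset _ _))
          have hlt : w' < v :=
            lt_of_le_of_ne (hle _ (Finset.mem_of_mem_erase hw')) (Finset.ne_of_mem_erase hw')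
          have : ∑ u ∈ C.erase v, f u ≤ mcs f w' := by
            apply Finset.le_sup (f := fun C => ∑ u ∈ C, f u)
            rw [mem_chainsLe]
            exact ⟨hchain.mono (by exact_mod_cast Finset.erase_subset _ _), fun u hu => hmax' u hu⟩
          exact this.trans (Finset.le_sup (mem_strictBelow.2 hlt))
      omega
    · rcases C.eq_empty_or_nonempty with he | hne
      · simp [he]
      · obtain ⟨w, hw, hmax⟩ := exists_chain_top _ hne hchain
        have hlt : w < v := lt_of_le_of_ne (hle _ hw) (fun h => hvC (h ▸ hw))
        have : ∑ u ∈ C, f u ≤ mcs f w := by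
          apply Finset.le_sup (f := fun C => ∑ u ∈ C, f u)
          rw [mem_chainsLe]
          exact ⟨hchain, hmax⟩
        have h2 := this.trans (Finset.le_sup (f := mcs f) (mem_strictBelow.2 hlt))
        omega
  · rcases (strictBelow v).eq_empty_or_nonempty with he | hne
    · have hsingle : ({v} : Finset W) ∈ chainsLe v := by
        rw [mem_chainsLe]
        constructor
        · simp only [coe_singleton]
          exact Set.Subsingleton.isChain (Set.subsingleton_singleton)
        · intro u hu; rw [Finset.mem_singleton] at hu; exact hu.le
      have hfv : f v ≤ mcs f v := by
        have := Finset.le_sup (f := fun C => ∑ u ∈ C, f u) hsingle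
        simp only [Finset.sum_singleton] at this
        exact this
      rw [he, Finset.sup_empty]
      simpa using hfv
    · obtain ⟨u, hu, hsup⟩ := Finset.exists_mem_eq_sup _ hne (mcs f)
      have hulv : u < v := mem_strictBelow.1 hu
      have hchne : (chainsLe u).Nonempty := by
        refine ⟨∅, ?_⟩
        rw [mem_chainsLe]
        constructor
        · simp only [coe_empty]; exact IsChain.empty
        · simp
      obtain ⟨C, hC, hCsup⟩ := Finset.exists_mem_eq_sup _ hchne (fun C => ∑ u ∈ C, f u)
      rw [mem_chainsLe] at hC
      obtain ⟨hchain, hle⟩ := hC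
      have hvnot : v ∉ C := fun hv => absurd ((hle v hv).trans_lt hulv) (lt_irrefl v)
      have hins : insert v C ∈ chainsLe v := by
        rw [mem_chainsLe]
        constructor
        · rw [Finset.coe_insert]
          exact hchain.insert (fun b hb _ => Or.inr ((hle b hb).trans hulv.le))
        · intro u' hu'
          rcases Finset.mem_insert.1 hu' with rfl | h
          · exact le_rfl
          · exact ((hle u' h).trans hulv.le)
      have hfin : ∑ u' ∈ insert v C, f u' ≤ mcs f v :=
        Finset.le_sup (f := fun C => ∑ u ∈ C, f u) hins
      rw [Finset.sum_insert hvnot] at hfin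
      have hmc : mcs f u = ∑ u' ∈ C, f u' := hCsup
      rw [hsup, hmc]
      exact hfin

theorem mcs_recover (f : W → ℕ) (v : W) :
    f v = mcs f v - (strictBelow v).sup (mcs f) := by
  rw [mcs_unfold]; omega

theorem mcs_inj {f₁ f₂ : W → ℕ} (h : mcs f₁ = mcs f₂) : f₁ = f₂ := by
  funext v
  rw [mcs_recover f₁ v, mcs_recover f₂ v, h]

end Generic




section Arith

theorem pow_le_descFactorial (m : ℕ) : ∀ n : ℕ, (m + 1 - n) ^ n ≤ m.descFactorial n := by
  intro n
  induction n with
  | zero => simp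
  | succ n ih =>
    rw [Nat.descFactorial_succ, pow_succ]
    have h1 : m + 1 - (n + 1) = m - n := by omega
    rw [h1]
    calc (m - n) ^ n * (m - n) ≤ (m + 1 - n) ^ n * (m - n) :=
          Nat.mul_le_mul_right _ (Nat.pow_le_pow_left (by omega) n)
    _ ≤ m.descFactorial n * (m - n) := Nat.mul_le_mul_right _ ih
    _ = (m - n) * m.descFactorial n := Nat.mul_comm _ _

theorem add_pow_le_aux (q d : ℕ) : ∀ n : ℕ, (q + d) ^ (n+1) ≤ q ^ (n+1) + (n+1) * d * (q+d) ^ n := by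
  intro n
  induction n with
  | zero => simp [pow_succ]
  | succ n ih =>
    have hqd : q ^ (n+1) ≤ (q + d) ^ (n+1) := Nat.pow_le_pow_left (by omega) _
    calc (q+d) ^ (n+2) = (q+d) ^ (n+1) * (q+d) := by rw [pow_succ]
    _ ≤ (q ^ (n+1) + (n+1) * d * (q+d) ^ n) * (q+d) := Nat.mul_le_mul_right _ ih
    _ = q ^ (n+1) * q + q ^ (n+1) * d + (n+1) * d * ((q+d) ^ n * (q + d)) := by ring
    _ = q ^ (n+2) + q ^ (n+1) * d + (n+1) * d * (q+d) ^ (n+1) := by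
          rw [← pow_succ, ← pow_succ]
    _ ≤ q ^ (n+2) + (q+d) ^ (n+1) * d + (n+1) * d * (q+d) ^ (n+1) := by
          have := Nat.mul_le_mul_right d hqd
          omega
    _ = q ^ (n+2) + (n+2) * d * (q+d) ^ (n+1) := by ring

theorem choose_ratio_le {n K E : ℕ} (hn : 1 ≤ n)
    (h : ∀ m, K * Nat.choose m n ≤ E * Nat.choose (m+n) n) : K ≤ E := by
  by_contra hKE
  push_neg at hKE
  obtain ⟨k, rfl⟩ : ∃ k, n = k + 1 := ⟨n - 1, by omega⟩
  set d := 2 * (k+1) with hd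
  set q := 2 ^ k * (E+1) * (k+1) * d + d with hq
  set m := q + k with hm
  have h1 : (E+1) * Nat.choose m (k+1) ≤ E * Nat.choose (m + (k+1)) (k+1) :=
    le_trans (Nat.mul_le_mul_right _ (by omega)) (h m)
  have h2 : (E+1) * Nat.descFactorial m (k+1) ≤ E * Nat.descFactorial (m + (k+1)) (k+1) := by
    rw [Nat.descFactorial_eq_factorial_mul_choose m, Nat.descFactorial_eq_factorial_mul_choose]
    calc (E+1) * (Nat.factorial (k+1) * Nat.choose m (k+1))
        = Nat.factorial (k+1) * ((E+1) * Nat.choose m (k+1)) := by ring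
    _ ≤ Nat.factorial (k+1) * (E * Nat.choose (m + (k+1)) (k+1)) := Nat.mul_le_mul_left _ h1
    _ = E * (Nat.factorial (k+1) * Nat.choose (m + (k+1)) (k+1)) := by ring
  have hq' : m + 1 - (k+1) = q := by omega
  have hdq : d ≤ q := Nat.le_add_left _ _
  have hqpos : 0 < q := by
    have : 0 < d := by omega
    omega
  have h5 : (q+d) ^ k ≤ 2 ^ k * q ^ k := by
    calc (q+d) ^ k ≤ (2*q) ^ k := Nat.pow_le_pow_left (by omega) k
    _ = 2 ^ k * q ^ k := mul_pow 2 q k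
  have h6 : E * ((k+1) * d * (q+d) ^ k) < q ^ (k+1) := by
    have e1 : E * ((k+1) * d * (q+d) ^ k) ≤ E * ((k+1) * d * (2 ^ k * q ^ k)) := by
      apply Nat.mul_le_mul_left
      apply Nat.mul_le_mul_left
      exact h5
    have e2 : E * ((k+1) * d * (2 ^ k * q ^ k)) = (2 ^ k * E * (k+1) * d) * q ^ k := by ring
    have e3 : 2 ^ k * E * (k+1) * d < q := by
      have : 2 ^ k * E * (k+1) * d ≤ 2 ^ k * (E+1) * (k+1) * d := by
        apply Nat.mul_le_mul_right
        apply Nat.mul_le_mul_right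
        exact Nat.mul_le_mul_left _ (by omega)
      have hdpos : 0 < d := by omega
      omega
    have e4 : (2 ^ k * E * (k+1) * d) * q ^ k < q * q ^ k :=
      Nat.mul_lt_mul_of_lt_of_le e3 (le_refl _) (pow_pos hqpos k)
    have e5 : q * q ^ k = q ^ (k+1) := by rw [pow_succ]; ring
    omega
  have hfinal : (E+1) * q ^ (k+1) ≤ E * (q+d) ^ (k+1) := by
    calc (E+1) * q ^ (k+1) = (E+1) * (m + 1 - (k+1)) ^ (k+1) := by rw [hq']
    _ ≤ (E+1) * Nat.descFactorial m (k+1) := Nat.mul_le_mul_left _ (pow_le_descFactorial m (k+1))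
    _ ≤ E * Nat.descFactorial (m + (k+1)) (k+1) := h2
    _ ≤ E * (m + (k+1)) ^ (k+1) := Nat.mul_le_mul_left _ (Nat.descFactorial_le_pow _ _)
    _ ≤ E * (q+d) ^ (k+1) := Nat.mul_le_mul_left _ (Nat.pow_le_pow_left (by omega) _)
  have hcontra : E * (q+d) ^ (k+1) < (E+1) * q ^ (k+1) := by
    have c1 : E * (q+d) ^ (k+1) ≤ E * (q ^ (k+1) + (k+1) * d * (q+d) ^ k) :=
      Nat.mul_le_mul_left _ (add_pow_le_aux q d k)
    have c2 : E * (q ^ (k+1) + (k+1) * d * (q+d) ^ k)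
        = E * q ^ (k+1) + E * ((k+1) * d * (q+d) ^ k) := by ring
    have c3 : (E+1) * q ^ (k+1) = E * q ^ (k+1) + q ^ (k+1) := by ring
    omega
  omega

end Arith

section WtSec

/-- bounded weakly monotone sequences -/
def Wt (n m : ℕ) := {w : Fin n → Fin (m+1) // Monotone w}

noncomputable instance (n m : ℕ) : Fintype (Wt n m) := by
  unfold Wt; infer_instance

theorem card_Wt_le (n m : ℕ) : Nat.card (Wt n m) ≤ (m + n).choose n := by
  classical
  have hσmono : ∀ w : Wt n m, StrictMono (fun i : Fin n => (w.1 i : ℕ) + i) := by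
    intro w i j hij
    have h1 : (w.1 i : ℕ) ≤ w.1 j := w.2 hij.le
    have h2 : (i : ℕ) < j := hij
    show (w.1 i : ℕ) + i < (w.1 j : ℕ) + j
    omega
  have hmem : ∀ w : Wt n m, (univ.image (fun i : Fin n => (w.1 i : ℕ) + i)) ∈
      (Finset.range (m + n)).powersetCard n := by
    intro w
    rw [Finset.mem_powersetCard]
    constructor
    · intro x hx
      rw [Finset.mem_image] at hx
      obtain ⟨i, _, rfl⟩ := hx
      rw [Finset.mem_range]
      have := (w.1 i).isLt
      have := i.isLt
      omega
    · rw [Finset.card_image_of_injective _ (hσmono w).injective, card_univ, Fintype.card_fin]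
  set ψ : Wt n m → ↥((Finset.range (m + n)).powersetCard n) :=
    fun w => ⟨univ.image (fun i : Fin n => (w.1 i : ℕ) + i), hmem w⟩ with hψ
  have hinj : Function.Injective ψ := by
    intro w₁ w₂ hw
    have hTeq : (univ.image (fun i : Fin n => (w₁.1 i : ℕ) + i))
        = (univ.image (fun i : Fin n => (w₂.1 i : ℕ) + i)) := congrArg Subtype.val hw
    set T := univ.image (fun i : Fin n => (w₁.1 i : ℕ) + i) with hT
    have hTcard : T.card = n := by
      rw [hT, Finset.card_image_of_injective _ (hσmono w₁).injective, card_univ, Fintype.card_fin]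
    have he₁ : (fun i : Fin n => (w₁.1 i : ℕ) + i) = T.orderEmbOfFin hTcard :=
      Finset.orderEmbOfFin_unique hTcard
        (fun i => Finset.mem_image_of_mem _ (mem_univ i)) (hσmono w₁)
    have he₂ : (fun i : Fin n => (w₂.1 i : ℕ) + i) = T.orderEmbOfFin hTcard := by
      apply Finset.orderEmbOfFin_unique hTcard
      · intro i
        rw [hTeq]
        exact Finset.mem_image_of_mem _ (mem_univ i)
      · exact hσmono w₂
    apply Subtype.ext
    funext i
    have : (w₁.1 i : ℕ) + i = (w₂.1 i : ℕ) + i := by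
      rw [congrFun he₁ i, congrFun he₂ i]
    have hval : (w₁.1 i : ℕ) = (w₂.1 i : ℕ) := by omega
    exact Fin.ext hval
  have := Nat.card_le_card_of_injective ψ hinj
  rwa [Nat.card_eq_fintype_card (α := ↥((Finset.range (m + n)).powersetCard n)),
    Fintype.card_coe, Finset.card_powersetCard, Finset.card_range] at this

end WtSec




/-- The type of linear extensions of the order on `W`. -/
abbrev ExtT (W : Type*) [Fintype W] [PartialOrder W] : Type _ :=
  {f : W ≃ Fin (Fintype.card W) // ∀ a b : W, a < b → f a < f b}

noncomputable instance (W : Type*) [Fintype W] [PartialOrder W] : Fintype (ExtT W) := by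
  classical
  exact Subtype.fintype _

theorem exists_base (V : Type*) [Fintype V] [PartialOrder V] :
    ∃ b : V ≃ Fin (Fintype.card V), ∀ u v : V, u < v → b u < b v := by
  classical
  letI : Fintype (LinearExtension V) := inferInstanceAs (Fintype V)
  have hcard : Fintype.card (LinearExtension V) = Fintype.card V := rfl
  let iso := monoEquivOfFin (LinearExtension V) hcard
  have hinj : Function.Injective (fun v : V => iso.symm (toLinearExtension v)) := by
    intro u v huv
    have h2 : toLinearExtension (α := V) u = toLinearExtension v := iso.symm.injective huv
    exact congrArg (fun z : LinearExtension V => (z : V)) h2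
  refine ⟨Equiv.ofBijective _ ((Fintype.bijective_iff_injective_and_card _).mpr
    ⟨hinj, by simp⟩), ?_⟩
  intro u v huv
  show iso.symm (toLinearExtension u) < iso.symm (toLinearExtension v)
  rw [iso.symm.lt_iff_lt]
  refine lt_of_le_of_ne (toLinearExtension.monotone huv.le) ?_
  intro hc
  exact absurd (congrArg (fun z : LinearExtension V => (z : V)) hc) huv.ne




section Core

variable {V : Type*} [Fintype V] [DecidableEq V] [PartialOrder V]

theorem card_ne_eq (a : V) : Fintype.card {x : V // x ≠ a} = Fintype.card V - 1 := by
  classical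
  have h1 : Fintype.card {x : V // ¬ (x = a)} = Fintype.card V - Fintype.card {x : V // x = a} :=
    Fintype.card_subtype_compl _
  have h2 : Fintype.card {x : V // x = a} = 1 := Fintype.card_subtype_eq a
  rw [h2] at h1
  exact h1

/-- the strictly monotone enumeration of `S` composed with `g`. -/
noncomputable def hFun (a : V) (g : ExtT {x : V // x ≠ a}) (S : Finset ℕ) :
    {x : V // x ≠ a} → ℕ :=
  fun v => (S.sort (· ≤ ·)).getD (g.1 v : ℕ) 0

theorem hFun_eq (a : V) (g : ExtT {x : V // x ≠ a}) (S : Finset ℕ)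
    (hS : S.card = Fintype.card {x : V // x ≠ a}) :
    hFun a g S = fun v => S.orderEmbOfFin hS (g.1 v) := by
  funext v
  unfold hFun
  rw [Finset.orderEmbOfFin_apply]
  have hlen : ((g.1 v : ℕ)) < (S.sort (· ≤ ·)).length := by
    rw [Finset.length_sort, hS]
    exact (g.1 v).isLt
  rw [List.getD_eq_getElem _ _ hlen]
  rfl

theorem hFun_strictMono (a : V) (g : ExtT {x : V // x ≠ a}) (S : Finset ℕ)
    (hS : S.card = Fintype.card {x : V // x ≠ a}) :
    StrictMono (hFun a g S) := by
  rw [hFun_eq a g S hS]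
  intro u v huv
  exact (S.orderEmbOfFin hS).strictMono (g.2 u v huv)

theorem hFun_mem (a : V) (g : ExtT {x : V // x ≠ a}) (S : Finset ℕ)
    (hS : S.card = Fintype.card {x : V // x ≠ a}) (v : {x : V // x ≠ a}) :
    hFun a g S v ∈ S := by
  rw [hFun_eq a g S hS]
  exact Finset.orderEmbOfFin_mem S hS _

theorem hFun_inj (a : V) (g : ExtT {x : V // x ≠ a}) (S : Finset ℕ)
    (hS : S.card = Fintype.card {x : V // x ≠ a}) :
    Function.Injective (hFun a g S) := by
  rw [hFun_eq a g S hS]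
  intro u v huv
  exact g.1.injective ((S.orderEmbOfFin hS).injective huv)

theorem hFun_image (a : V) (g : ExtT {x : V // x ≠ a}) (S : Finset ℕ)
    (hS : S.card = Fintype.card {x : V // x ≠ a}) :
    univ.image (hFun a g S) = S := by
  apply Finset.eq_of_subset_of_card_le
  · intro u hu
    rw [Finset.mem_image] at hu
    obtain ⟨v, _, rfl⟩ := hu
    exact hFun_mem a g S hS v
  · rw [Finset.card_image_of_injective _ (hFun_inj a g S hS), card_univ, hS]

/-- the pyramid function on `V`. -/
noncomputable def fFun (A : Finset V) (a : V) (t : ℕ) (h : {x : V // x ≠ a} → ℕ) : V → ℕ :=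
  fun v => if hv : v = a then t else itr h ⟨v, hv⟩ + (if v ∈ A then t + 1 else 0)

theorem fFun_a (A : Finset V) (a : V) (t : ℕ) (h : {x : V // x ≠ a} → ℕ) :
    fFun A a t h a = t := dif_pos rfl

theorem fFun_ne (A : Finset V) (a : V) (t : ℕ) (h : {x : V // x ≠ a} → ℕ) {v : V} (hv : v ≠ a) :
    fFun A a t h v = itr h ⟨v, hv⟩ + (if v ∈ A then t + 1 else 0) := dif_neg hv

theorem fFun_CB {A : Finset V} (hA : IsAntichain (· ≤ ·) (A : Set V)) {a : V} (ha : a ∈ A)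
    {h : {x : V // x ≠ a} → ℕ} (hs : StrictMono h) {r t m : ℕ}
    (hhr : ∀ v, h v < r) (hrm : r < m) (ht : t = m - r) :
    ∀ C : Finset V, IsChain (· ≤ ·) (C : Set V) → ∑ u ∈ C, fFun A a t h u ≤ m := by
  intro C hC
  have hCA : ∀ u ∈ C, ∀ v ∈ C, u ∈ A → v ∈ A → u = v := by
    intro u hu v hv huA hvA
    by_contra hne
    rcases hC hu hv hne with hle | hle
    · exact hA huA hvA hne hle
    · exact hA hvA huA (Ne.symm hne) hle
  -- the sum over the part away from `a`
  have hsplit : ∀ C' : Finset V, C' ⊆ C → a ∉ C' →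
      ∑ u ∈ C', fFun A a t h u
        = (∑ v ∈ C'.subtype (· ≠ a), itr h v) + (t + 1) * (C'.filter (· ∈ A)).card := by
    intro C' hsub hanot
    have hterm : ∀ u ∈ C', fFun A a t h u
        = (fun u => (if hu : u = a then 0 else itr h ⟨u, hu⟩)
            + (if u ∈ A then t + 1 else 0)) u := by
      intro u hu
      have hune : u ≠ a := fun hh => hanot (hh ▸ hu)
      rw [fFun_ne A a t h hune]
      simp only [dif_neg hune]
    rw [Finset.sum_congr rfl hterm, Finset.sum_add_distrib]
    congr 1
    · -- subtype sum
      have hmap : (C'.subtype (· ≠ a)).map (Function.Embedding.subtype _) = C' := by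
        rw [Finset.subtype_map]
        apply Finset.filter_true_of_mem
        intro u hu
        exact fun hh => hanot (hh ▸ hu)
      conv_lhs => rw [← hmap]
      rw [Finset.sum_map]
      apply Finset.sum_congr rfl
      intro v _
      simp only [Function.Embedding.coe_subtype]
      simp [v.2]
    · rw [← Finset.sum_filter, Finset.sum_const, smul_eq_mul, mul_comm]
  have hitrle : ∀ C' : Finset V, C' ⊆ C →
      (C'.subtype (· ≠ a)).Nonempty → ∑ v ∈ C'.subtype (· ≠ a), itr h v ≤ r - 1 := by
    intro C' hsub hne
    have hchain : IsChain (· ≤ ·) ((C'.subtype (· ≠ a) : Finset {x : V // x ≠ a}) :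
        Set {x : V // x ≠ a}) := by
      intro u hu v hv hne'
      have hu' : (u : V) ∈ C := hsub (Finset.mem_subtype.1 hu)
      have hv' : (v : V) ∈ C := hsub (Finset.mem_subtype.1 hv)
      have hvne : (u : V) ≠ (v : V) := fun hh => hne' (Subtype.ext hh)
      rcases hC hu' hv' hvne with hle | hle
      · exact Or.inl hle
      · exact Or.inr hle
    obtain ⟨w, hw, hmax⟩ := exists_chain_top _ hne hchain
    have := sum_itr_le hs _ hchain w hw hmax
    have := hhr w
    omega
  by_cases haC : a ∈ C
  · -- a ∈ C : no other antichain elements in C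
    have hfe : (C.erase a).filter (· ∈ A) = ∅ := by
      rw [Finset.filter_eq_empty_iff]
      intro u hu huA
      exact (Finset.ne_of_mem_erase hu) (hCA u (Finset.mem_of_mem_erase hu) a haC huA ha)
    rw [← Finset.sum_erase_add C _ haC, fFun_a,
      hsplit (C.erase a) (Finset.erase_subset _ _) (Finset.notMem_erase _ _), hfe]
    simp only [Finset.card_empty, Nat.mul_zero, Nat.add_zero]
    rcases ((C.erase a).subtype (· ≠ a)).eq_empty_or_nonempty with he | hne
    · rw [he, Finset.sum_empty]
      omega
    · have := hitrle (C.erase a) (Finset.erase_subset _ _) hne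
      omega
  · -- a ∉ C
    have hce : C.erase a = C := Finset.erase_eq_of_notMem haC
    rw [hsplit C (le_refl _) haC]
    have hcard1 : (C.filter (· ∈ A)).card ≤ 1 := by
      rw [Finset.card_le_one]
      intro u hu v hv
      rw [Finset.mem_filter] at hu hv
      exact hCA u hu.1 v hv.1 hu.2 hv.2
    rcases (C.subtype (· ≠ a)).eq_empty_or_nonempty with he | hne
    · -- C has no elements other than a; since a ∉ C, C ∩ A = ∅ too unless... 
      have hCempty : C.filter (· ∈ A) = ∅ := by
        rw [Finset.filter_eq_empty_iff]
        intro u hu huA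
        have hune : u ≠ a := fun hh => haC (hh ▸ hu)
        have : (⟨u, hune⟩ : {x : V // x ≠ a}) ∈ C.subtype (· ≠ a) :=
          Finset.mem_subtype.2 hu
        rw [he] at this
        exact absurd this (Finset.notMem_empty _)
      -- in fact C.subtype empty and a ∉ C means C = ∅
      have : ∀ u ∈ C, False := by
        intro u hu
        have hune : u ≠ a := fun hh => haC (hh ▸ hu)
        have : (⟨u, hune⟩ : {x : V // x ≠ a}) ∈ C.subtype (· ≠ a) :=
          Finset.mem_subtype.2 hu
        rw [he] at this
        exact absurd this (Finset.notMem_empty _)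
      rw [he, Finset.sum_empty, hCempty]
      simp
    · have h1 := hitrle C (le_refl _) hne
      -- also r ≥ 1
      obtain ⟨w, hw⟩ := hne
      have h2 : 0 < r := lt_of_le_of_lt (Nat.zero_le _) (hhr w)
      have h3 : (t + 1) * (C.filter (· ∈ A)).card ≤ (t + 1) * 1 :=
        Nat.mul_le_mul_left _ hcard1
      omega

end Core


section Sorted

variable {V : Type*} [Fintype V] [DecidableEq V] [PartialOrder V]

/-- sorting key -/
noncomputable def keyF (x : V → ℕ) (b : V ≃ Fin (Fintype.card V)) : V → ℕ :=
  fun v => x v * Fintype.card V + (b v : ℕ)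

theorem keyF_lt₁ {x : V → ℕ} {b : V ≃ Fin (Fintype.card V)} {u v : V} (h : x u < x v) :
    keyF x b u < keyF x b v := by
  unfold keyF
  have h1 : (b u : ℕ) < Fintype.card V := (b u).isLt
  have h2 : x u * Fintype.card V + Fintype.card V = (x u + 1) * Fintype.card V := by ring
  have h3 : (x u + 1) * Fintype.card V ≤ x v * Fintype.card V :=
    Nat.mul_le_mul_right _ (by omega)
  omega

theorem keyF_lt₂ {x : V → ℕ} {b : V ≃ Fin (Fintype.card V)} {u v : V} (h : x u ≤ x v)
    (hb : (b u : ℕ) < (b v : ℕ)) : keyF x b u < keyF x b v := by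
  rcases Nat.lt_or_ge (x u) (x v) with h' | h'
  · exact keyF_lt₁ h'
  · have hx : x u = x v := le_antisymm h h'
    unfold keyF
    rw [hx]
    omega

theorem keyF_x_le {x : V → ℕ} {b : V ≃ Fin (Fintype.card V)} {u v : V}
    (h : keyF x b u ≤ keyF x b v) : x u ≤ x v := by
  by_contra hc
  exact absurd h (Nat.not_le.mpr (keyF_lt₁ (by omega)))

theorem keyF_inj (x : V → ℕ) (b : V ≃ Fin (Fintype.card V)) :
    Function.Injective (keyF x b) := by
  intro u v huv
  have h1 : x u = x v := le_antisymm (keyF_x_le huv.le) (keyF_x_le huv.ge)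
  have h2 : (b u : ℕ) = (b v : ℕ) := by
    unfold keyF at huv
    rw [h1] at huv
    omega
  exact b.injective (Fin.ext h2)

/-- the image of the key -/
noncomputable def imgF (x : V → ℕ) (b : V ≃ Fin (Fintype.card V)) : Finset ℕ :=
  univ.image (keyF x b)

theorem imgF_card (x : V → ℕ) (b : V ≃ Fin (Fintype.card V)) :
    (imgF x b).card = Fintype.card V := by
  rw [imgF, Finset.card_image_of_injective _ (keyF_inj x b), card_univ]

/-- the sorting permutation associated to `x` (with tie-break `b`) -/
noncomputable def sortedEquiv (x : V → ℕ) (b : V ≃ Fin (Fintype.card V)) :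
    V ≃ Fin (Fintype.card V) :=
  (Equiv.ofBijective
      (fun v => (⟨keyF x b v, Finset.mem_image_of_mem _ (mem_univ v)⟩ : ↥(imgF x b)))
      ((Fintype.bijective_iff_injective_and_card _).mpr
        ⟨fun u v huv => keyF_inj x b (congrArg Subtype.val huv), by
          rw [Fintype.card_coe, imgF_card]⟩)).trans
    ((imgF x b).orderIsoOfFin (imgF_card x b)).symm.toEquiv

theorem sortedEquiv_lt_iff (x : V → ℕ) (b : V ≃ Fin (Fintype.card V)) (u v : V) :
    sortedEquiv x b u < sortedEquiv x b v ↔ keyF x b u < keyF x b v := by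
  unfold sortedEquiv
  simp only [Equiv.trans_apply, RelIso.coe_fn_toEquiv]
  rw [OrderIso.lt_iff_lt]
  exact Subtype.mk_lt_mk

theorem sortedEquiv_ext {x : V → ℕ} (hx : Monotone x) {b : V ≃ Fin (Fintype.card V)}
    (hb : ∀ u v : V, u < v → b u < b v) :
    ∀ u v : V, u < v → sortedEquiv x b u < sortedEquiv x b v := fun u v huv =>
  (sortedEquiv_lt_iff x b u v).mpr (keyF_lt₂ (hx huv.le) (hb u v huv))

theorem sortedEquiv_w_mono (x : V → ℕ) (b : V ≃ Fin (Fintype.card V)) :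
    Monotone (fun i => x ((sortedEquiv x b).symm i)) := by
  intro i j hij
  rcases eq_or_lt_of_le hij with rfl | hlt
  · exact le_refl _
  · have h1 : sortedEquiv x b ((sortedEquiv x b).symm i)
        < sortedEquiv x b ((sortedEquiv x b).symm j) := by
      rwa [Equiv.apply_symm_apply, Equiv.apply_symm_apply]
    have h2 := (sortedEquiv_lt_iff x b _ _).mp h1
    exact keyF_x_le h2.le

end Sorted

section PhiSec

variable {V : Type*} [Fintype V] [DecidableEq V] [PartialOrder V]

/-- the chain-point associated to a pyramid datum -/
noncomputable def xOf (A : Finset V) (m : ℕ) (a : V) (g : ExtT {x : V // x ≠ a})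
    (R : Finset ℕ) : V → ℕ :=
  mcs (fFun A a (m - R.sup id) (hFun a g (R.erase (R.sup id))))

theorem rOf_mem {R : Finset ℕ} (hne : R.Nonempty) : R.sup id ∈ R := by
  obtain ⟨u, hu, hsup⟩ := Finset.exists_mem_eq_sup R hne id
  rw [hsup]
  exact hu

theorem S_card {R : Finset ℕ} (hne : R.Nonempty) (hcard : R.card = Fintype.card V) (a : V) :
    (R.erase (R.sup id)).card = Fintype.card {x : V // x ≠ a} := by
  rw [Finset.card_erase_of_mem (rOf_mem hne), hcard, card_ne_eq]

theorem hhr_fact {R : Finset ℕ} (hne : R.Nonempty) (hcard : R.card = Fintype.card V)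
    (a : V) (g : ExtT {x : V // x ≠ a}) (v : {x : V // x ≠ a}) :
    hFun a g (R.erase (R.sup id)) v < R.sup id := by
  have hmem := hFun_mem a g _ (S_card hne hcard a) v
  rw [Finset.mem_erase] at hmem
  exact lt_of_le_of_ne (Finset.le_sup (f := id) hmem.2) hmem.1

theorem rOf_lt {R : Finset ℕ} {m : ℕ} (hne : R.Nonempty) (hsub : R ⊆ Finset.range m) :
    R.sup id < m :=
  Finset.mem_range.mp (hsub (rOf_mem hne))

theorem xOf_le {A : Finset V} (hA : IsAntichain (· ≤ ·) (A : Set V)) {a : V} (ha : a ∈ A)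
    (g : ExtT {x : V // x ≠ a}) {R : Finset ℕ} {m : ℕ}
    (hne : R.Nonempty) (hsub : R ⊆ Finset.range m) (hcard : R.card = Fintype.card V) (v : V) :
    xOf A m a g R v ≤ m := by
  apply mcs_le
  exact fFun_CB hA ha (hFun_strictMono a g _ (S_card hne hcard a))
    (hhr_fact hne hcard a g) (rOf_lt hne hsub) rfl

/-- the main injection -/
noncomputable def Phi (A : Finset V) (m : ℕ) (b : V ≃ Fin (Fintype.card V))
    (hb : ∀ u v : V, u < v → b u < b v) (hA : IsAntichain (· ≤ ·) (A : Set V))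
    (p : Σ a : ↑A, ExtT {x : V // x ≠ (a : V)} ×
      ↥((Finset.range m).powersetCard (Fintype.card V))) :
    ExtT V × Wt (Fintype.card V) m :=
  ⟨⟨sortedEquiv (xOf A m (p.1 : V) p.2.1 (p.2.2 : Finset ℕ)) b,
      sortedEquiv_ext (mcs_mono _) hb⟩,
    ⟨fun i => ⟨xOf A m (p.1 : V) p.2.1 (p.2.2 : Finset ℕ)
        ((sortedEquiv (xOf A m (p.1 : V) p.2.1 (p.2.2 : Finset ℕ)) b).symm i), by
      have hmem := (Finset.mem_powersetCard.mp p.2.2.2)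
      have hne : (p.2.2 : Finset ℕ).Nonempty := by
        rw [← Finset.card_pos, hmem.2]
        exact Fintype.card_pos_iff.mpr ⟨(p.1 : V)⟩
      exact Nat.lt_succ_of_le (xOf_le hA p.1.2 p.2.1 hne hmem.1 hmem.2 _)⟩, by
    intro i j hij
    have := sortedEquiv_w_mono (xOf A m (p.1 : V) p.2.1 (p.2.2 : Finset ℕ)) b hij
    exact Fin.mk_le_mk.mpr this⟩⟩

end PhiSec

section InjSec

variable {V : Type*} [Fintype V] [DecidableEq V] [PartialOrder V]

theorem Phi_inj (A : Finset V) (m : ℕ) (b : V ≃ Fin (Fintype.card V))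
    (hb : ∀ u v : V, u < v → b u < b v) (hA : IsAntichain (· ≤ ·) (A : Set V)) :
    Function.Injective (Phi A m b hb hA) := by
  rintro ⟨a₁, g₁, R₁⟩ ⟨a₂, g₂, R₂⟩ hpq
  have hmem₁ := Finset.mem_powersetCard.mp R₁.2
  have hmem₂ := Finset.mem_powersetCard.mp R₂.2
  have hne₁ : (R₁ : Finset ℕ).Nonempty := by
    rw [← Finset.card_pos, hmem₁.2]
    exact Fintype.card_pos_iff.mpr ⟨(a₁ : V)⟩
  have hne₂ : (R₂ : Finset ℕ).Nonempty := by
    rw [← Finset.card_pos, hmem₂.2]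
    exact Fintype.card_pos_iff.mpr ⟨(a₁ : V)⟩
  have hS₁c : ((R₁ : Finset ℕ).erase ((R₁ : Finset ℕ).sup id)).card
      = Fintype.card {x : V // x ≠ (a₁ : V)} := S_card hne₁ hmem₁.2 _
  have hS₂c : ((R₂ : Finset ℕ).erase ((R₂ : Finset ℕ).sup id)).card
      = Fintype.card {x : V // x ≠ (a₂ : V)} := S_card hne₂ hmem₂.2 _
  have hr₁m : (R₁ : Finset ℕ).sup id < m := rOf_lt hne₁ hmem₁.1
  have hr₂m : (R₂ : Finset ℕ).sup id < m := rOf_lt hne₂ hmem₂.1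
  -- step 1 : recover x
  have hx : xOf A m (a₁ : V) g₁ (R₁ : Finset ℕ) = xOf A m (a₂ : V) g₂ (R₂ : Finset ℕ) := by
    funext v
    have h1 := congrArg (fun z : ExtT V × Wt (Fintype.card V) m =>
      ((z.2.1 (z.1.1 v)) : ℕ)) hpq
    simpa [Phi, Equiv.symm_apply_apply] using h1
  -- step 2 : recover f
  have hf : fFun A (a₁ : V) (m - (R₁ : Finset ℕ).sup id)
        (hFun (a₁ : V) g₁ ((R₁ : Finset ℕ).erase ((R₁ : Finset ℕ).sup id)))
      = fFun A (a₂ : V) (m - (R₂ : Finset ℕ).sup id)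
        (hFun (a₂ : V) g₂ ((R₂ : Finset ℕ).erase ((R₂ : Finset ℕ).sup id))) :=
    mcs_inj hx
  -- step 3 : recover a
  have hval : (a₁ : V) = (a₂ : V) := by
    by_contra hneq
    have hne' : (a₂ : V) ≠ (a₁ : V) := Ne.symm hneq
    have e₁ := congrFun hf (a₁ : V)
    have e₂ := congrFun hf (a₂ : V)
    rw [fFun_a, fFun_ne _ _ _ _ hneq, if_pos a₁.2] at e₁
    rw [fFun_ne _ _ _ _ hne', if_pos a₂.2, fFun_a] at e₂
    omega
  have haa : a₁ = a₂ := Subtype.ext hval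
  subst haa
  -- step 4 : recover t
  have ht : m - (R₁ : Finset ℕ).sup id = m - (R₂ : Finset ℕ).sup id := by
    have := congrFun hf (a₁ : V)
    rwa [fFun_a, fFun_a] at this
  -- step 5 : recover itr, then h
  have hitr : itr (hFun (a₁ : V) g₁ ((R₁ : Finset ℕ).erase ((R₁ : Finset ℕ).sup id)))
      = itr (hFun (a₁ : V) g₂ ((R₂ : Finset ℕ).erase ((R₂ : Finset ℕ).sup id))) := by
    funext v
    have hfe := congrFun hf (v : V)
    rw [fFun_ne _ _ _ _ v.2, fFun_ne _ _ _ _ v.2, ht] at hfe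
    have hveta : (⟨(v : V), v.2⟩ : {x : V // x ≠ (a₁ : V)}) = v := rfl
    rw [hveta] at hfe
    omega
  have hh : hFun (a₁ : V) g₁ ((R₁ : Finset ℕ).erase ((R₁ : Finset ℕ).sup id))
      = hFun (a₁ : V) g₂ ((R₂ : Finset ℕ).erase ((R₂ : Finset ℕ).sup id)) :=
    itr_inj (hFun_strictMono _ g₁ _ hS₁c) (hFun_strictMono _ g₂ _ hS₂c) hitr
  -- step 6 : recover S
  have hSeq : (R₁ : Finset ℕ).erase ((R₁ : Finset ℕ).sup id)
      = (R₂ : Finset ℕ).erase ((R₂ : Finset ℕ).sup id) := by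
    rw [← hFun_image (a₁ : V) g₁ _ hS₁c, ← hFun_image (a₁ : V) g₂ _ hS₂c, hh]
  -- step 7 : recover r and R
  have hreq : (R₁ : Finset ℕ).sup id = (R₂ : Finset ℕ).sup id := by omega
  have hReq : (R₁ : Finset ℕ) = (R₂ : Finset ℕ) := by
    rw [← Finset.insert_erase (rOf_mem hne₁), ← Finset.insert_erase (rOf_mem hne₂),
      hSeq, hreq]
  -- step 8 : recover g
  have hg : g₁ = g₂ := by
    apply Subtype.ext
    apply Equiv.ext
    intro v
    have hv := congrFun hh v
    rw [hSeq] at hv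
    rw [hFun_eq _ g₁ _ hS₂c, hFun_eq _ g₂ _ hS₂c] at hv
    exact ((R₂ : Finset ℕ).erase ((R₂ : Finset ℕ).sup id)).orderEmbOfFin hS₂c
      |>.injective hv
  have hR : R₁ = R₂ := Subtype.ext hReq
  subst hg
  subst hR
  rfl

theorem key (A : Finset V) (hA : IsAntichain (· ≤ ·) (A : Set V)) :
    ∑ v ∈ A, Nat.card (ExtT {x : V // x ≠ v}) ≤ Nat.card (ExtT V) := by
  rcases A.eq_empty_or_nonempty with rfl | hAne
  · simp
  obtain ⟨a0, ha0⟩ := hAne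
  have hnV : Nonempty V := ⟨a0⟩
  have hn : 1 ≤ Fintype.card V := Fintype.card_pos_iff.mpr hnV
  obtain ⟨b, hb⟩ := exists_base V
  apply choose_ratio_le hn
  intro m
  have hle := Nat.card_le_card_of_injective _ (Phi_inj A m b hb hA)
  have hdom : Nat.card (Σ a : ↑A, ExtT {x : V // x ≠ (a : V)} ×
      ↥((Finset.range m).powersetCard (Fintype.card V)))
      = ∑ v ∈ A, Nat.card (ExtT {x : V // x ≠ v}) * m.choose (Fintype.card V) := by
    rw [Nat.card_eq_fintype_card, Fintype.card_sigma,
      ← Finset.sum_coe_sort A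
        (fun v => Nat.card (ExtT {x : V // x ≠ v}) * m.choose (Fintype.card V))]
    apply Finset.sum_congr rfl
    intro a _
    rw [Fintype.card_prod, Nat.card_eq_fintype_card, Fintype.card_coe,
      Finset.card_powersetCard, Finset.card_range]
  have hcod : Nat.card (ExtT V × Wt (Fintype.card V) m)
      ≤ Nat.card (ExtT V) * (m + Fintype.card V).choose (Fintype.card V) := by
    rw [Nat.card_prod]
    exact Nat.mul_le_mul_left _ (card_Wt_le _ _)
  calc (∑ v ∈ A, Nat.card (ExtT {x : V // x ≠ v})) * m.choose (Fintype.card V)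
      = ∑ v ∈ A, Nat.card (ExtT {x : V // x ≠ v}) * m.choose (Fintype.card V) :=
        Finset.sum_mul _ _ _
    _ = Nat.card (Σ a : ↑A, ExtT {x : V // x ≠ (a : V)} ×
        ↥((Finset.range m).powersetCard (Fintype.card V))) := hdom.symm
    _ ≤ Nat.card (ExtT V × Wt (Fintype.card V) m) := hle
    _ ≤ Nat.card (ExtT V) * (m + Fintype.card V).choose (Fintype.card V) := hcod

end InjSec

end SA

theorem stmt_8 {V : Type*} [Fintype V] [DecidableEq V] (P : PartialOrder V)
    (A : Finset V) (hA : IsAntichain P.le ↑A) :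
    ∑ v ∈ A, eCount {x : V // x ≠ v} (delOrder P v) ≤ eCount V P := by
  letI := P
  have hkey := SA.key A hA
  have h1 : ∀ v ∈ A, eCount {x : V // x ≠ v} (delOrder P v)
      = Nat.card (SA.ExtT {x : V // x ≠ v}) := by
    intro v _
    have hinst : delOrder P v = (inferInstance : PartialOrder {x : V // x ≠ v}) := by
      apply PartialOrder.ext
      intro x y
      exact Iff.rfl
    rw [hinst]
    rfl
  rw [Finset.sum_congr rfl h1]
  exact hkey
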